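/- Let a > 0, τ ∈ (0,1), d > 0, and let φ ∈ C([−1,0]) satisfy φ(t) < 0 for t ∈ [−1,−τ), φ(−τ) = 0, φ(t) > 0 for t ∈ (−τ,0), and φ(0) = d. If x : [−1,∞) → ℝ is a solution of the relay equation ẋ(t) = R(x(t−1)) with initial function φ, then x(t) = x0(t − ((1−τ)t0 + d/a + a + 1)) for all t ≥ (1−τ)t0 + d/a, where x0 is extended T0-periodically to all of ℝ. -/

import Mathlib

/-- The relay nonlinearity: `R a x = 1` if `x ≤ 0`, and `R a x = -a` if `x > 0`. -/
noncomputable def R (a x : ℝ) : ℝ := if x ≤ 0 then 1 else -a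

open Set

/-- If `h = h A` on `[A, M)` and `h` is continuous, then also at `M`. -/
lemma closure_eq_aux (h : ℝ → ℝ) (A M : ℝ) (hAM : A < M)
    (hcont : ContinuousOn h (Set.Icc A M))
    (hy : ∀ t, A ≤ t → t < M → h t = h A) : h M = h A := by
  have hC : IsClosed (Set.Icc A M ∩ h ⁻¹' {h A}) :=
    hcont.preimage_isClosed_of_isClosed isClosed_Icc isClosed_singleton
  have hsub : Set.Ico A M ⊆ Set.Icc A M ∩ h ⁻¹' {h A} := by
    intro t ht
    exact ⟨⟨ht.1, ht.2.le⟩, by simp [hy t ht.1 ht.2]⟩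
  have h1 : M ∈ closure (Set.Ico A M) := by
    rw [closure_Ico hAM.ne]; exact ⟨hAM.le, le_rfl⟩
  have hMem : M ∈ Set.Icc A M ∩ h ⁻¹' {h A} :=
    hC.closure_subset (closure_mono hsub h1)
  exact hMem.2

/-- A continuous function with zero derivative on the open interval is constant. -/
lemma const_on_Icc_aux (h : ℝ → ℝ) (u v : ℝ) (huv : u < v)
    (hcont : ContinuousOn h (Set.Icc u v))
    (hder : ∀ t ∈ Set.Ioo u v, HasDerivAt h 0 t) :
    ∀ t ∈ Set.Icc u v, h t = h u := by
  have key : ∀ w ∈ Set.Ioo u v, h v = h w := by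
    intro w hw
    have := constant_of_has_deriv_right_zero (f := h) (a := w) (b := v)
      (hcont.mono (Set.Icc_subset_Icc hw.1.le le_rfl))
      (fun y hy => (hder y ⟨lt_of_lt_of_le hw.1 hy.1, hy.2⟩).hasDerivWithinAt)
    exact this v ⟨hw.2.le, le_rfl⟩
  have hC : IsClosed (Set.Icc u v ∩ h ⁻¹' {h v}) :=
    hcont.preimage_isClosed_of_isClosed isClosed_Icc isClosed_singleton
  have hsub : Set.Ioo u v ⊆ Set.Icc u v ∩ h ⁻¹' {h v} := by
    intro w hw
    exact ⟨⟨hw.1.le, hw.2.le⟩, by simp [(key w hw).symm]⟩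
  have huMem : u ∈ Set.Icc u v ∩ h ⁻¹' {h v} := by
    apply hC.closure_subset
    apply closure_mono hsub
    rw [closure_Ioo huv.ne]; exact ⟨le_rfl, huv.le⟩
  have huv' : h u = h v := huMem.2
  intro t ht
  rcases eq_or_lt_of_le ht.1 with h1 | h1
  · rw [← h1]
  rcases eq_or_lt_of_le ht.2 with h2 | h2
  · rw [h2, huv']
  rw [← (key t ⟨h1, h2⟩), huv']

/-- A continuous function with derivative `c` off a finite set is linear. -/
lemma linear_of_deriv_aux (x : ℝ → ℝ) (c A B : ℝ) (hAB : A < B) (F : Set ℝ)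
    (hF : (F ∩ Set.Icc A B).Finite)
    (hcont : ContinuousOn x (Set.Icc A B))
    (hder : ∀ t ∈ Set.Ioo A B, t ∉ F → HasDerivAt x c t) :
    ∀ t ∈ Set.Icc A B, x t = x A + c * (t - A) := by
  set h := fun t => x t - c * t with hh
  have hhc : ContinuousOn h (Set.Icc A B) :=
    hcont.sub ((continuous_const.mul continuous_id).continuousOn)
  have hhd : ∀ t ∈ Set.Ioo A B, t ∉ F → HasDerivAt h 0 t := by
    intro t ht hts
    have h2 : HasDerivAt (fun t : ℝ => c * t) c t := by
      simpa using (hasDerivAt_id t).const_mul c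
    have h3 := (hder t ht hts).sub h2
    rw [sub_self] at h3
    exact h3
  suffices hs : ∀ t ∈ Set.Icc A B, h t = h A by
    intro t ht
    have := hs t ht
    simp only [hh] at this
    linarith [this]
  set E := {T | T ∈ Set.Icc A B ∧ ∀ t ∈ Set.Icc A T, h t = h A} with hE
  have hAE : A ∈ E := ⟨⟨le_rfl, hAB.le⟩, fun t ht => by
    have : t = A := le_antisymm ht.2 ht.1
    rw [this]⟩
  have hbdd : BddAbove E := ⟨B, fun T hT => hT.1.2⟩
  have hne : E.Nonempty := ⟨A, hAE⟩
  set M := sSup E with hM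
  have hAM : A ≤ M := le_csSup hbdd hAE
  have hMB : M ≤ B := csSup_le hne (fun T hT => hT.1.2)
  have hMIco : ∀ t, A ≤ t → t < M → h t = h A := by
    intro t ht htM
    obtain ⟨T, hT, hT2⟩ := exists_lt_of_lt_csSup hne htM
    exact hT.2 t ⟨ht, hT2.le⟩
  have hME : ∀ t ∈ Set.Icc A M, h t = h A := by
    rcases eq_or_lt_of_le hAM with hAM' | hAM'
    · intro t ht
      have : t = A := le_antisymm (hAM' ▸ ht.2) ht.1
      rw [this]
    · intro t ht
      rcases eq_or_lt_of_le ht.2 with h2 | h2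
      · rw [h2]
        exact closure_eq_aux h A M hAM' (hhc.mono (Set.Icc_subset_Icc le_rfl hMB)) hMIco
      · exact hMIco t ht.1 h2
  rcases eq_or_lt_of_le hMB with h1 | h1
  · intro t ht; exact hME t ⟨ht.1, h1 ▸ ht.2⟩
  · exfalso
    set F' := (F ∩ Set.Icc A B) ∩ Set.Ioi M with hF'
    have hF'fin : F'.Finite := hF.subset Set.inter_subset_left
    obtain ⟨p, hMp, hpB, hpF⟩ : ∃ p, M < p ∧ p ≤ B ∧ ∀ t ∈ Set.Ioo M p, t ∉ F := by
      by_cases hcase : F'.Nonempty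
      · have hne' : hF'fin.toFinset.Nonempty := by
          rwa [Set.Finite.toFinset_nonempty]
        set q := hF'fin.toFinset.min' hne' with hq
        have hqmem : q ∈ F' := by
          have := hF'fin.toFinset.min'_mem hne'
          rwa [Set.Finite.mem_toFinset] at this
        refine ⟨q, hqmem.2, hqmem.1.2.2, ?_⟩
        intro t ht htF
        have htF' : t ∈ F' :=
          ⟨⟨htF, ⟨hAM.trans ht.1.le, ht.2.le.trans hqmem.1.2.2⟩⟩, ht.1⟩
        have hle : q ≤ t := hF'fin.toFinset.min'_le t (by rwa [Set.Finite.mem_toFinset])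
        exact absurd ht.2 (not_lt.mpr hle)
      · refine ⟨B, h1, le_rfl, ?_⟩
        intro t ht htF
        exact hcase ⟨t, ⟨⟨htF, ⟨hAM.trans ht.1.le, ht.2.le⟩⟩, ht.1⟩⟩
    have hconst := const_on_Icc_aux h M p hMp
      (hhc.mono (Set.Icc_subset_Icc hAM hpB))
      (fun t ht => hhd t ⟨lt_of_le_of_lt hAM ht.1, lt_of_lt_of_le ht.2 hpB⟩ (hpF t ht))
    have hpE : p ∈ E := ⟨⟨hAM.trans hMp.le, hpB⟩, fun t ht => by
      rcases le_or_gt t M with h2 | h2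
      · exact hME t ⟨ht.1, h2⟩
      · rw [hconst t ⟨h2.le, ht.2⟩, hME M ⟨hAM, le_rfl⟩]⟩
    exact absurd (le_csSup hbdd hpE) (not_le.mpr hMp)

/-- Extension lemma: if the sign condition holds as long as the formula holds
up to `t-1`, then the linear formula propagates over the whole interval. -/
lemma step_linear (a : ℝ) (x : ℝ → ℝ) (S : Set ℝ)
    (hS : ∀ A B : ℝ, (S ∩ Set.Icc A B).Finite)
    (hder : ∀ t : ℝ, 0 < t → t ∉ S → HasDerivAt x (R a (x (t - 1))) t)
    (hcont : ContinuousOn x (Set.Ici (-1 : ℝ)))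
    (A B v c : ℝ) (hA : 0 ≤ A) (hAB : A < B)
    (hstart : x A = v)
    (hsign : ∀ t ∈ Set.Ioo A B, (∀ s, A ≤ s → s ≤ t - 1 → x s = v + c * (s - A)) →
      R a (x (t - 1)) = c) :
    ∀ t ∈ Set.Icc A B, x t = v + c * (t - A) := by
  have hIcc : ∀ u w : ℝ, A ≤ u → Set.Icc u w ⊆ Set.Ici (-1 : ℝ) := by
    intro u w hu t ht
    have h0 : (0:ℝ) ≤ t := le_trans (hA.trans hu) ht.1
    exact le_trans (by norm_num) h0
  set g := fun t => v + c * (t - A) with hg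
  set E := {T | T ∈ Set.Icc A B ∧ ∀ t ∈ Set.Icc A T, x t = g t} with hE
  have hAE : A ∈ E := ⟨⟨le_rfl, hAB.le⟩, fun t ht => by
    have : t = A := le_antisymm ht.2 ht.1
    rw [this]; simp [hg, hstart]⟩
  have hbdd : BddAbove E := ⟨B, fun T hT => hT.1.2⟩
  have hne : E.Nonempty := ⟨A, hAE⟩
  set M := sSup E with hM
  have hAM : A ≤ M := le_csSup hbdd hAE
  have hMB : M ≤ B := csSup_le hne (fun T hT => hT.1.2)
  have hMIco : ∀ t, A ≤ t → t < M → x t = g t := by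
    intro t ht htM
    obtain ⟨T, hT, hT2⟩ := exists_lt_of_lt_csSup hne htM
    exact hT.2 t ⟨ht, hT2.le⟩
  have hME : ∀ t ∈ Set.Icc A M, x t = g t := by
    rcases eq_or_lt_of_le hAM with hAM' | hAM'
    · intro t ht
      have : t = A := le_antisymm (hAM' ▸ ht.2) ht.1
      rw [this]; simp [hg, hstart]
    · intro t ht
      rcases eq_or_lt_of_le ht.2 with h2 | h2
      · rw [h2]
        have hcg : ContinuousOn (fun t => x t - g t) (Set.Icc A M) :=
          (hcont.mono (hIcc A M le_rfl)).sub (by fun_prop)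
        have key : (fun t => x t - g t) M = (fun t => x t - g t) A := by
          apply closure_eq_aux _ A M hAM' hcg
          intro s hs1 hs2
          simp only [hMIco s hs1 hs2, hg, hstart]
          ring
        simp only [hg, hstart] at key ⊢
        linarith [key]
      · exact hMIco t ht.1 h2
  rcases eq_or_lt_of_le hMB with h1 | h1
  · intro t ht; exact hME t ⟨ht.1, h1 ▸ ht.2⟩
  · exfalso
    set T' := M + min 1 (B - M) / 2 with hT'
    have hmin : 0 < min 1 (B - M) := lt_min one_pos (by linarith)
    have hMT' : M < T' := by simp only [hT']; linarith
    have hT'B : T' < B := by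
      have : min 1 (B - M) ≤ B - M := min_le_right _ _
      simp only [hT']; linarith
    have hlin := linear_of_deriv_aux x c M T' hMT' S (hS M T')
      (hcont.mono (hIcc M T' hAM))
      (by
        intro t ht htS
        have htB : t ∈ Set.Ioo A B := ⟨lt_of_le_of_lt hAM ht.1, lt_trans ht.2 hT'B⟩
        have ht0 : 0 < t := lt_of_le_of_lt (hA.trans hAM) ht.1
        have hRc : R a (x (t - 1)) = c := by
          apply hsign t htB
          intro s hs1 hs2
          apply hME s ⟨hs1, ?_⟩
          have h1 : min 1 (B - M) ≤ 1 := min_le_left _ _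
          have : t < M + 1 := by
            simp only [hT'] at ht
            linarith [ht.2]
          linarith
        rw [← hRc]
        exact hder t ht0 htS)
    have hT'E : T' ∈ E := by
      refine ⟨⟨hAM.trans hMT'.le, hT'B.le⟩, ?_⟩
      intro t ht
      rcases le_or_gt t M with h2 | h2
      · exact hME t ⟨ht.1, h2⟩
      · have := hlin t ⟨h2.le, ht.2⟩
        rw [this, hME M ⟨hAM, le_rfl⟩]
        simp only [hg]; ring
    exact absurd (le_csSup hbdd hT'E) (not_le.mpr hMT')


/-- `x : [-1,∞) → ℝ` is a solution of the relay equation `x'(t) = R a (x (t-1))`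
with initial function `φ ∈ C([-1,0])`: `x` is continuous on `[-1,∞)`, coincides
with `φ` on `[-1,0]`, and for every `t > 0` outside an exceptional set having
finitely many points in each bounded interval, `x` is differentiable at `t` with
`x'(t) = R a (x (t-1))`. -/
def IsSolution (a : ℝ) (φ x : ℝ → ℝ) : Prop :=
  ContinuousOn x (Set.Ici (-1 : ℝ)) ∧
  (∀ t ∈ Set.Icc (-1 : ℝ) 0, x t = φ t) ∧
  ∃ S : Set ℝ, (∀ A B : ℝ, (S ∩ Set.Icc A B).Finite) ∧
    ∀ t : ℝ, 0 < t → t ∉ S → HasDerivAt x (R a (x (t - 1))) t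

set_option maxHeartbeats 1000000 in
/-- a solution with an initial function negative on `[-1,-τ)`,
vanishing at `-τ`, positive on `(-τ,0)` with `φ(0) = d > 0`, coincides with
`x0 (t - ((1-τ)t0 + d/a + a + 1))` for all `t ≥ (1-τ)t0 + d/a`. -/
theorem stmt_4 (a : ℝ) (ha : 0 < a) (τ : ℝ) (hτ : τ ∈ Set.Ioo (0 : ℝ) 1)
    (d : ℝ) (hd : 0 < d) (t0 T0 : ℝ)
    (ht0 : t0 = (a + 1) / a) (hT0 : T0 = (a + 1) ^ 2 / a)
    (φ : ℝ → ℝ) (hφc : ContinuousOn φ (Set.Icc (-1 : ℝ) 0))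
    (hφ1 : ∀ t ∈ Set.Ico (-1 : ℝ) (-τ), φ t < 0) (hφτ : φ (-τ) = 0)
    (hφ2 : ∀ t ∈ Set.Ioo (-τ) (0 : ℝ), 0 < φ t) (hφ0 : φ 0 = d)
    (x : ℝ → ℝ) (hx : IsSolution a φ x)
    (x0 : ℝ → ℝ)
    (hx0per : ∀ t : ℝ, x0 (t + T0) = x0 t)
    (hx0a : ∀ t ∈ Set.Icc (0 : ℝ) 1, x0 t = t)
    (hx0b : ∀ t ∈ Set.Icc (1 : ℝ) (t0 + 1), x0 t = -a * (t - t0))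
    (hx0c : ∀ t ∈ Set.Icc (t0 + 1) T0, x0 t = t - T0) :
    ∀ t : ℝ, (1 - τ) * t0 + d / a ≤ t →
      x t = x0 (t - ((1 - τ) * t0 + d / a + a + 1)) := by
  obtain ⟨hτ0, hτ1⟩ := hτ
  obtain ⟨hxc, hxφ, S, hSfin, hxd⟩ := hx
  have ha' : a ≠ 0 := ne_of_gt ha
  set z := (1 - τ) * t0 + d / a with hz
  -- arithmetic facts
  have hat0 : a * t0 = a + 1 := by rw [ht0]; field_simp
  have haT0 : a * T0 = (a + 1) ^ 2 := by rw [hT0]; field_simp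
  have hT0pos : 0 < T0 := by rw [hT0]; positivity
  have ht0one : 1 < t0 := by nlinarith [hat0]
  have hT0big : a + 2 < T0 := by nlinarith [haT0]
  have hT0t0 : T0 = t0 + a + 1 := by rw [hT0, ht0]; field_simp; ring
  have hda : 0 < d / a := div_pos hd ha
  have hz1 : 1 - τ < z := by
    rw [hz]
    nlinarith [mul_pos (show (0:ℝ) < 1 - τ by linarith)
      (show (0:ℝ) < t0 - 1 by linarith), hda]
  have hB0 : (0:ℝ) < 1 - τ := by linarith
  have hzpos : 0 < z := by linarith
  have hza : a * z = (1 - τ) * (a + 1) + d := by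
    rw [hz, ht0]; field_simp
  have hxzero : x 0 = d := by
    rw [hxφ 0 ⟨by norm_num, le_rfl⟩, hφ0]
  -- Phase 0 : [0, 1-τ]
  have phase0 : ∀ t ∈ Set.Icc (0:ℝ) (1-τ), x t = d + 1 * (t - 0) := by
    apply step_linear a x S hSfin hxd hxc 0 (1-τ) d 1 le_rfl hB0 hxzero
    intro t ht _
    have h1 : x (t-1) = φ (t-1) := hxφ (t-1) ⟨by linarith [ht.1], by linarith [ht.2]⟩
    have h2 : φ (t-1) < 0 := hφ1 (t-1) ⟨by linarith [ht.1], by linarith [ht.2]⟩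
    rw [h1]; unfold R; rw [if_pos h2.le]
  have phase0' : ∀ t ∈ Set.Icc (0:ℝ) (1-τ), x t = d + t := fun t ht => by
    rw [phase0 t ht]; ring
  have hx1τ : x (1-τ) = d + (1-τ) := by
    rw [phase0' (1-τ) ⟨hB0.le, le_rfl⟩]
  -- Phase 1 : [1-τ, z]
  have phase1 : ∀ t ∈ Set.Icc (1-τ) z, x t = (d + (1-τ)) + (-a) * (t - (1-τ)) := by
    apply step_linear a x S hSfin hxd hxc (1-τ) z (d + (1-τ)) (-a) hB0.le hz1 hx1τ
    intro t ht hyp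
    have hpos : 0 < x (t-1) := by
      rcases lt_trichotomy (t-1) 0 with hc | hc | hc
      · rw [hxφ (t-1) ⟨by linarith [ht.1], hc.le⟩]
        exact hφ2 (t-1) ⟨by linarith [ht.1], hc⟩
      · rw [hc, hxzero]; exact hd
      · rcases le_or_gt (t-1) (1-τ) with hc2 | hc2
        · rw [phase0' (t-1) ⟨hc.le, hc2⟩]; linarith
        · have hform := hyp (t-1) hc2.le le_rfl
          have hlt : a * ((t-1) - (1-τ)) < a * (z - (1-τ)) :=
            mul_lt_mul_of_pos_left (by linarith [ht.2]) ha
          nlinarith [hform, hlt, hza]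
    unfold R; rw [if_neg (not_le.mpr hpos)]
  have hxz : x z = 0 := by
    rw [phase1 z ⟨hz1.le, le_rfl⟩]
    linear_combination -1 * hza
  have posInit : ∀ s, z - 1 < s → s < z → 0 < x s := by
    intro s hs1 hs2
    rcases lt_trichotomy s 0 with hc | hc | hc
    · rw [hxφ s ⟨by linarith, hc.le⟩]
      exact hφ2 s ⟨by linarith, hc⟩
    · rw [hc, hxzero]; exact hd
    · rcases le_or_gt s (1-τ) with hc2 | hc2
      · rw [phase0' s ⟨hc.le, hc2⟩]; linarith
      · have hform := phase1 s ⟨hc2.le, hs2.le⟩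
        have hlt : a * (s - (1-τ)) < a * (z - (1-τ)) :=
          mul_lt_mul_of_pos_left (by linarith) ha
        nlinarith [hform, hlt, hza]
  -- one period step
  have period_step : ∀ p : ℝ, 0 < p → x p = 0 → (∀ s, p - 1 < s → s < p → 0 < x s) →
      (∀ t ∈ Set.Icc p (p+1), x t = -a * (t - p)) ∧
      (∀ t ∈ Set.Icc (p+1) (p+a+2), x t = -a + (t - (p+1))) ∧
      (∀ t ∈ Set.Icc (p+a+2) (p+T0), x t = 1 - a * (t - (p+a+2))) ∧
      x (p+T0) = 0 ∧ (∀ s, p+T0-1 < s → s < p+T0 → 0 < x s) := by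
    intro p hp hp0 hpos
    have phI : ∀ t ∈ Set.Icc p (p+1), x t = 0 + (-a) * (t - p) := by
      apply step_linear a x S hSfin hxd hxc p (p+1) 0 (-a) hp.le (by linarith) hp0
      intro t ht _
      have := hpos (t-1) (by linarith [ht.1]) (by linarith [ht.2])
      unfold R; rw [if_neg (not_le.mpr this)]
    have phI' : ∀ t ∈ Set.Icc p (p+1), x t = -a * (t - p) := fun t ht => by
      rw [phI t ht]; ring
    have hxp1 : x (p+1) = -a := by
      rw [phI' (p+1) ⟨by linarith, le_rfl⟩]; ring
    have phII : ∀ t ∈ Set.Icc (p+1) (p+a+2), x t = -a + 1 * (t - (p+1)) := by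
      apply step_linear a x S hSfin hxd hxc (p+1) (p+a+2) (-a) 1 (by linarith) (by linarith) hxp1
      intro t ht hyp
      have hnp : x (t-1) ≤ 0 := by
        rcases le_or_gt (t-1) (p+1) with hc | hc
        · have hform := phI' (t-1) ⟨by linarith [ht.1], hc⟩
          nlinarith [hform, mul_nonneg ha.le (show (0:ℝ) ≤ t-1-p by linarith [ht.1])]
        · have hform := hyp (t-1) hc.le le_rfl
          linarith [hform, ht.2]
      unfold R; rw [if_pos hnp]
    have phII' : ∀ t ∈ Set.Icc (p+1) (p+a+2), x t = -a + (t - (p+1)) := fun t ht => by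
      rw [phII t ht]; ring
    have hxpa2 : x (p+a+2) = 1 := by
      rw [phII' (p+a+2) ⟨by linarith, le_rfl⟩]; ring
    have phIII : ∀ t ∈ Set.Icc (p+a+2) (p+T0), x t = 1 + (-a) * (t - (p+a+2)) := by
      apply step_linear a x S hSfin hxd hxc (p+a+2) (p+T0) 1 (-a) (by linarith) (by linarith) hxpa2
      intro t ht hyp
      have hpos2 : 0 < x (t-1) := by
        rcases le_or_gt (t-1) (p+a+2) with hc | hc
        · have hform := phII' (t-1) ⟨by linarith [ht.1], hc⟩
          linarith [hform, ht.1]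
        · have hform := hyp (t-1) hc.le le_rfl
          have hlt : a * ((t-1) - (p+a+2)) < a * (T0 - a - 2) :=
            mul_lt_mul_of_pos_left (by linarith [ht.2]) ha
          nlinarith [hform, hlt, haT0]
      unfold R; rw [if_neg (not_le.mpr hpos2)]
    have phIII' : ∀ t ∈ Set.Icc (p+a+2) (p+T0), x t = 1 - a * (t - (p+a+2)) := fun t ht => by
      rw [phIII t ht]; ring
    have hxpT0 : x (p+T0) = 0 := by
      rw [phIII' (p+T0) ⟨by linarith, le_rfl⟩]
      nlinarith [haT0]
    have hposT0 : ∀ s, p+T0-1 < s → s < p+T0 → 0 < x s := by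
      intro s hs1 hs2
      rcases le_or_gt s (p+a+2) with hc | hc
      · have hform := phII' s ⟨by linarith, hc⟩
        linarith [hform, hs1]
      · have hform := phIII' s ⟨hc.le, hs2.le⟩
        have hlt : a * (s - (p+a+2)) < a * (T0 - a - 2) :=
          mul_lt_mul_of_pos_left (by linarith) ha
        nlinarith [hform, hlt, haT0]
    exact ⟨phI', phII', phIII', hxpT0, hposT0⟩
  -- invariant by induction
  have inv : ∀ n : ℕ, x (z + n*T0) = 0 ∧ (∀ s, z + n*T0 - 1 < s → s < z + n*T0 → 0 < x s) := by
    intro n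
    induction n with
    | zero =>
      constructor
      · simpa using hxz
      · intro s hs1 hs2
        push_cast at hs1 hs2
        exact posInit s (by linarith) (by linarith)
    | succ k ih =>
      have hpk : 0 < z + (k:ℝ)*T0 := by
        have : 0 ≤ (k:ℝ)*T0 := mul_nonneg (Nat.cast_nonneg k) hT0pos.le
        linarith
      obtain ⟨_, _, _, h4, h5⟩ := period_step (z + (k:ℝ)*T0) hpk ih.1 ih.2
      have e : z + ((k:ℕ)+1:ℕ)*T0 = z + (k:ℝ)*T0 + T0 := by push_cast; ring
      constructor
      · rw [e]; exact h4
      · intro s hs1 hs2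
        rw [e] at hs1 hs2
        exact h5 s hs1 hs2
  have periods : ∀ n : ℕ,
      (∀ t ∈ Set.Icc (z + n*T0) (z + n*T0 + 1), x t = -a * (t - (z + n*T0))) ∧
      (∀ t ∈ Set.Icc (z + n*T0 + 1) (z + n*T0 + a + 2), x t = -a + (t - (z + n*T0 + 1))) ∧
      (∀ t ∈ Set.Icc (z + n*T0 + a + 2) (z + n*T0 + T0), x t = 1 - a * (t - (z + n*T0 + a + 2))) := by
    intro n
    have hpk : 0 < z + (n:ℝ)*T0 := by
      have : 0 ≤ (n:ℝ)*T0 := mul_nonneg (Nat.cast_nonneg n) hT0pos.le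
      linarith
    obtain ⟨h1, h2, h3, _, _⟩ := period_step (z + (n:ℝ)*T0) hpk (inv n).1 (inv n).2
    exact ⟨h1, h2, h3⟩
  -- periodicity of x0 for natural multiples
  have perN : ∀ (n : ℕ) (s : ℝ), x0 (s + n*T0) = x0 s := by
    intro n
    induction n with
    | zero => intro s; simp
    | succ k ih =>
      intro s
      have e : s + ((k:ℕ)+1:ℕ)*T0 = (s + (k:ℝ)*T0) + T0 := by push_cast; ring
      rw [e, hx0per, ih]
  -- final assembly
  intro t htz
  have hr0 : 0 ≤ (t - z)/T0 := div_nonneg (by linarith) hT0pos.le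
  have hk0 : 0 ≤ ⌊(t - z)/T0⌋ := Int.floor_nonneg.mpr hr0
  set n : ℕ := ⌊(t - z)/T0⌋.toNat with hn
  have hcast : (n : ℝ) = ((⌊(t - z)/T0⌋ : ℤ) : ℝ) := by
    rw [hn]; exact_mod_cast congrArg (fun k : ℤ => (k : ℝ)) (Int.toNat_of_nonneg hk0)
  have h1 : (n:ℝ) ≤ (t - z)/T0 := by rw [hcast]; exact Int.floor_le _
  have h2 : (t - z)/T0 < (n:ℝ) + 1 := by
    rw [hcast]
    have := Int.lt_floor_add_one ((t - z)/T0)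
    push_cast at this
    exact this
  have hp1 : z + (n:ℝ)*T0 ≤ t := by
    have := (le_div_iff₀ hT0pos).mp h1
    linarith
  have hp2 : t < z + (n:ℝ)*T0 + T0 := by
    have := (div_lt_iff₀ hT0pos).mp h2
    nlinarith [this]
  obtain ⟨f1, f2, f3⟩ := periods n
  have e1 : t - (z + a + 1) = (t - (z + (n:ℝ)*T0) - (a+1)) + (n:ℝ)*T0 := by ring
  have key : x0 (t - (z + a + 1)) = x0 (t - (z + (n:ℝ)*T0) - (a+1)) := by
    rw [e1, perN n]
  have e2 : (t - (z + (n:ℝ)*T0) - (a+1)) + T0 = t - (z + (n:ℝ)*T0) + t0 := by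
    rw [hT0t0]; ring
  have key2 : x0 (t - (z + a + 1)) = x0 (t - (z + (n:ℝ)*T0) + t0) := by
    rw [key, ← hx0per (t - (z + (n:ℝ)*T0) - (a+1)), e2]
  show x t = x0 (t - (z + a + 1))
  rw [key2]
  rcases le_or_gt t (z + (n:ℝ)*T0 + 1) with hcA | hcA
  · -- Phase I
    rw [f1 t ⟨hp1, hcA⟩]
    rw [hx0b (t - (z + (n:ℝ)*T0) + t0) ⟨by linarith, by linarith⟩]
    ring
  rcases le_or_gt t (z + (n:ℝ)*T0 + a + 2) with hcB | hcB
  · -- Phase II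
    rw [f2 t ⟨hcA.le, hcB⟩]
    rcases le_or_gt t (z + (n:ℝ)*T0 + a + 1) with hcB2 | hcB2
    · rw [hx0c (t - (z + (n:ℝ)*T0) + t0) ⟨by linarith, by linarith [hT0t0]⟩]
      rw [hT0t0]; ring
    · have e3 : t - (z + (n:ℝ)*T0) + t0 = (t - (z + (n:ℝ)*T0) - (a+1)) + T0 := by
        rw [hT0t0]; ring
      rw [e3, hx0per, hx0a (t - (z + (n:ℝ)*T0) - (a+1)) ⟨by linarith, by linarith⟩]
      ring
  · -- Phase III
    rw [f3 t ⟨hcB.le, hp2.le⟩]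
    have e3 : t - (z + (n:ℝ)*T0) + t0 = (t - (z + (n:ℝ)*T0) - (a+1)) + T0 := by
      rw [hT0t0]; ring
    rw [e3, hx0per, hx0b (t - (z + (n:ℝ)*T0) - (a+1))
      ⟨by linarith, by linarith [hT0t0, hp2]⟩]
    linear_combination -1 * hat0
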